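/- arXiv:2407.05454 — 4 statements merged into one kernel-verified Lean document; each statement's English description precedes it below -/
import Mathlib

section
/- Let z ∈ Ĥ and let (f₀, z₀), (f₁, z₁), … be the continued fraction data of z, defined by z₀ = z, f_i the unique Puiseux polynomial with ν(z_i - f_i) > 0, and z_{i+1} = 1/(z_i - f_i) whenever z_i ≠ f_i. Let σ_i(x) = 1/(x - f_i) and ρ_n = σ_n ∘ ⋯ ∘ σ_0. If z_{n+1} is defined, then ν(ρ_n(z)/ρ_n'(z)) = deg(f_{n+1}) + 2·Σ_{i=1}^{n} deg(f_i). -/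
universe u

/-- Evaluation of a finite continued fraction `[f₀, f₁, …, f_N]` in a field,
`cfEval [a] = a`, `cfEval (a :: l) = a + (cfEval l)⁻¹` (with the convention `0⁻¹ = 0`). -/
def cfEval {L : Type u} [Field L] : List L → L
  | [] => 0
  | a :: l => a + (cfEval l)⁻¹

/-- The Moebius maps `ρ_n = σ_n ∘ ⋯ ∘ σ_0`, where `σ_i x = (x - f_i)⁻¹`. -/
def rho {L : Type u} [Field L] (f : ℕ → L) : ℕ → L → L
  | 0, x => (x - f 0)⁻¹
  | n + 1, x => (rho f n x - f (n + 1))⁻¹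

/-- The derivative `ρ_n'` of `ρ_n`, computed by the chain rule from
`σ_i'(x) = -((x - f_i)⁻¹)²`. -/
def rho' {L : Type u} [Field L] (f : ℕ → L) : ℕ → L → L
  | 0, x => -((x - f 0)⁻¹) ^ 2
  | n + 1, x => -((rho f n x - f (n + 1))⁻¹) ^ 2 * rho' f n x

/-- An abstract presentation of the completion `K̂` of the Puiseux field
`E⟨⟨t⁻¹⟩⟩` over a field `E`.  The field `K` carries an additive valuation
`ν` with values in `ℚ` on nonzero elements (normalized by `ν (t^r) = -r`,
where `mono r` plays the role of the monomial `t^r`), the subfield `E` is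
embedded via `emb`, the simple "Laurent Puiseux polynomials" (the ring
generated by `E` and all rational powers of `t`) are dense, and `K` is
complete for `ν`. -/
structure PuiseuxCompletion (E : Type u) [Field E] where
  K : Type u
  [fieldK : Field K]
  ν : K → ℚ
  emb : E →+* K
  mono : ℚ → K
  mono_zero : mono 0 = 1
  mono_mul : ∀ r s : ℚ, mono r * mono s = mono (r + s)
  ν_mono : ∀ r : ℚ, ν (mono r) = -r
  ν_emb : ∀ e : E, e ≠ 0 → ν (emb e) = 0
  ν_mul : ∀ x y : K, x ≠ 0 → y ≠ 0 → ν (x * y) = ν x + ν y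
  ν_add : ∀ x y : K, x ≠ 0 → y ≠ 0 → x + y ≠ 0 → min (ν x) (ν y) ≤ ν (x + y)
  dense' : ∀ z : K, ∀ C : ℚ,
    ∃ f ∈ Subring.closure (Set.range emb ∪ Set.range mono), z = f ∨ C < ν (z - f)
  complete' : ∀ uSeq : ℕ → K,
    (∀ C : ℚ, ∃ N : ℕ, ∀ m ≥ N, ∀ n ≥ N, uSeq m = uSeq n ∨ C < ν (uSeq m - uSeq n)) →
    ∃ z : K, ∀ C : ℚ, ∃ N : ℕ, ∀ n ≥ N, uSeq n = z ∨ C < ν (uSeq n - z)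

attribute [instance] PuiseuxCompletion.fieldK

namespace PuiseuxCompletion

variable {E : Type u} [Field E] (P : PuiseuxCompletion E)

/-- The ring `Ā = E⟨t⟩` of Puiseux polynomials: finite `E`-linear combinations of
nonnegative rational powers of `t`. -/
def Abar : Subring P.K :=
  Subring.closure (Set.range P.emb ∪ P.mono '' {r : ℚ | 0 ≤ r})

/-- `deg f = -ν f`. -/
def deg (f : P.K) : ℚ := -P.ν f

/-- The rational Puiseux field `k̃ = Quot(Ā) = ⋃ₙ E(t^{1/n})`, as a subfield of `K̂`. -/
def ktilde : Subfield P.K := Subfield.closure (P.Abar : Set P.K)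

/-- `uSeq n → z` with respect to the valuation `ν`. -/
def TendsTo (uSeq : ℕ → P.K) (z : P.K) : Prop :=
  ∀ C : ℚ, ∃ N : ℕ, ∀ n ≥ N, uSeq n = z ∨ C < P.ν (uSeq n - z)

/-- One step of the continued fraction algorithm succeeds at index `i`:
`f i` is the Puiseux polynomial with `ν (z_i - f i) > 0`, the fraction does not
end at `i` (`z_i ≠ f i`), and `z_{i+1} = (z_i - f i)⁻¹`. -/
def CFStep (f zs : ℕ → P.K) (i : ℕ) : Prop :=
  f i ∈ P.Abar ∧ 0 < P.ν (zs i - f i) ∧ zs i ≠ f i ∧ zs (i + 1) = (zs i - f i)⁻¹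

/-- The `n`-th approximant `x_n = [f₀, …, f_n]_{ev}`. -/
def approx (f : ℕ → P.K) (n : ℕ) : P.K :=
  cfEval (List.ofFn fun i : Fin (n + 1) => f i)

/-- The continued fraction of `z` begins with the coefficients `f 0, …, f n`. -/
def CFBegins (f : ℕ → P.K) (n : ℕ) (z : P.K) : Prop :=
  ∃ zs : ℕ → P.K, zs 0 = z ∧ (∀ i < n, P.CFStep f zs i) ∧
    f n ∈ P.Abar ∧ (zs n = f n ∨ 0 < P.ν (zs n - f n))

/-- `z` is the value of the continued fraction expression with coefficients `f`
and length `L` (finite or infinite); the coefficients are Puiseux polynomials of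
positive degree after the zeroth one. -/
def CFExprEval (f : ℕ → P.K) (L : WithTop ℕ) (z : P.K) : Prop :=
  f 0 ∈ P.Abar ∧
  (∀ i : ℕ, 1 ≤ i → (i : WithTop ℕ) ≤ L → f i ∈ P.Abar ∧ 0 < P.deg (f i)) ∧
  ((∃ N : ℕ, L = (N : WithTop ℕ) ∧ z = P.approx f N) ∨
    (L = ⊤ ∧ P.TendsTo (fun n => P.approx f n) z))

/-- The equivalence relation `(a, r) ~ (a', r')` iff `r = r'` and `ν (a - a') ≥ r`
(the pairs define the same Berkovich point `η_{a,r}` of type II or III). -/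
def ballEquiv (p q : P.K × ℝ) : Prop :=
  p.2 = q.2 ∧ (p.1 = q.1 ∨ p.2 ≤ (P.ν (p.1 - q.1) : ℝ))

open scoped Classical in
/-- The Berkovich hyperbolic distance, computed on representatives. -/
noncomputable def berkDist (p q : P.K × ℝ) : ℝ :=
  if p.1 = q.1 ∨ min p.2 q.2 ≤ (P.ν (p.1 - q.1) : ℝ) then |p.2 - q.2|
  else p.2 + q.2 - 2 * (P.ν (p.1 - q.1) : ℝ)

/-- The closed ball `B_a^{[r]} = {b : ν (b - a) ≥ r}` corresponding to `η_{a,r}`. -/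
def closedBall (a : P.K) (r : ℝ) : Set P.K :=
  {b : P.K | b = a ∨ r ≤ (P.ν (b - a) : ℝ)}

/-- The Moebius transformation associated to a `2 × 2` matrix. -/
def mob (g : Matrix (Fin 2) (Fin 2) P.K) (x : P.K) : P.K :=
  (g 0 0 * x + g 0 1) / (g 1 0 * x + g 1 1)

/-- The ring `A_M = E[t^{1/M}]`. -/
def AM (M : ℕ) : Subring P.K :=
  Subring.closure (Set.range P.emb ∪ {P.mono (1 / (M : ℚ))})

/-- The field `E(t^{1/M})`, whose `ν`-completion inside `K̂` is `K_M = E((t^{-1/M}))`. -/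
def kM (M : ℕ) : Subfield P.K :=
  Subfield.closure (Set.range P.emb ∪ {P.mono (1 / (M : ℚ))})

end PuiseuxCompletion

open PuiseuxCompletion in
/-- if `z_{n+1}` is defined then
`ν (ρ_n(z) / ρ_n'(z)) = deg f_{n+1} + 2 Σ_{i=1}^n deg f_i`. -/
theorem statement3 {E : Type u} [Field E] (P : PuiseuxCompletion E)
    (z : P.K) (f zs : ℕ → P.K) (n : ℕ)
    (h0 : zs 0 = z) (hstep : ∀ i ≤ n, P.CFStep f zs i)
    (hfn : f (n + 1) ∈ P.Abar)
    (hcn : zs (n + 1) = f (n + 1) ∨ 0 < P.ν (zs (n + 1) - f (n + 1))) :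
    P.ν (rho f n z / rho' f n z) =
      P.deg (f (n + 1)) + 2 * ∑ i ∈ Finset.Icc 1 n, P.deg (f i) := by
  classical
  -- basic valuation facts
  have hν1 : P.ν 1 = 0 := by
    rw [← P.mono_zero, P.ν_mono]; norm_num
  have hνinv : ∀ x : P.K, x ≠ 0 → P.ν x⁻¹ = -P.ν x := by
    intro x hx
    have h := P.ν_mul x x⁻¹ hx (inv_ne_zero hx)
    rw [mul_inv_cancel₀ hx, hν1] at h
    linarith
  have hνm1 : P.ν (-1 : P.K) = 0 := by
    have h := P.ν_mul (-1 : P.K) (-1) (by norm_num) (by norm_num)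
    rw [neg_mul_neg, one_mul, hν1] at h
    linarith
  have hνneg : ∀ x : P.K, x ≠ 0 → P.ν (-x) = P.ν x := by
    intro x hx
    have h := P.ν_mul (-1 : P.K) x (by norm_num) hx
    rw [neg_one_mul, hνm1] at h
    linarith
  have hνsq : ∀ x : P.K, x ≠ 0 → P.ν (-x ^ 2) = 2 * P.ν x := by
    intro x hx
    rw [hνneg _ (pow_ne_zero 2 hx), sq, P.ν_mul x x hx hx]; ring
  -- ultrametric: ν b = ν a when ν a < 0 and a - b has positive valuation (or a = b)
  have key : ∀ a b : P.K, a ≠ 0 → P.ν a < 0 → (a = b ∨ 0 < P.ν (a - b)) →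
      P.ν b = P.ν a := by
    intro a b ha hva hab
    by_cases heq : a = b
    · rw [heq]
    rcases hab with h | hr
    · exact absurd h heq
    have hrne : a - b ≠ 0 := sub_ne_zero.mpr heq
    have hbne : b ≠ 0 := by
      intro hb
      rw [hb, sub_zero] at hr
      linarith
    have h1 : min (P.ν b) (P.ν (a - b)) ≤ P.ν a := by
      have := P.ν_add b (a - b) hbne hrne (by rw [add_sub_cancel]; exact ha)
      rwa [add_sub_cancel] at this
    have h2 : min (P.ν a) (P.ν (a - b)) ≤ P.ν b := by
      have h2' := P.ν_add a (-(a - b)) ha (neg_ne_zero.mpr hrne)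
        (by rw [neg_sub, add_sub_cancel]; exact hbne)
      rw [hνneg _ hrne] at h2'
      have : a + -(a - b) = b := by ring
      rwa [this] at h2'
    rcases le_total (P.ν b) (P.ν (a - b)) with h | h
    · rw [min_eq_left h] at h1
      have : min (P.ν a) (P.ν (a - b)) = P.ν a := min_eq_left (by linarith)
      rw [this] at h2
      linarith
    · rw [min_eq_right h] at h1
      linarith
  -- z_k for 1 ≤ k ≤ n+1 : nonzero with negative valuation
  have hz : ∀ k, 1 ≤ k → k ≤ n + 1 → zs k ≠ 0 ∧ P.ν (zs k) < 0 := by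
    intro k hk1 hk2
    obtain ⟨j, rfl⟩ : ∃ j, k = j + 1 := ⟨k - 1, by omega⟩
    obtain ⟨_, hpos, hne, heq⟩ := hstep j (by omega)
    have hsub : zs j - f j ≠ 0 := sub_ne_zero.mpr hne
    constructor
    · rw [heq]; exact inv_ne_zero hsub
    · rw [heq, hνinv _ hsub]; linarith
  -- main induction: rho and rho' values
  have main : ∀ k, k ≤ n → rho f k z = zs (k + 1) ∧
      rho' f k z ≠ 0 ∧
      P.ν (rho' f k z) = ∑ i ∈ Finset.Icc 1 (k + 1), 2 * P.ν (zs i) := by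
    intro k
    induction k with
    | zero =>
      intro _
      obtain ⟨_, hpos, hne, heq⟩ := hstep 0 (by omega)
      rw [h0] at heq hne
      have hsub : z - f 0 ≠ 0 := sub_ne_zero.mpr hne
      have h1 : rho f 0 z = zs 1 := by rw [rho, heq]
      refine ⟨h1, ?_, ?_⟩
      · show -((z - f 0)⁻¹) ^ 2 ≠ 0
        simp [hsub]
      · show P.ν (-((z - f 0)⁻¹) ^ 2) = _
        rw [hνsq _ (inv_ne_zero hsub), ← heq]
        simp
    | succ k ih =>
      intro hk
      obtain ⟨h1, h2, h3⟩ := ih (by omega)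
      obtain ⟨_, hpos, hne, heq⟩ := hstep (k + 1) (by omega)
      have hsub : zs (k + 1) - f (k + 1) ≠ 0 := sub_ne_zero.mpr hne
      have hr1 : rho f (k + 1) z = zs (k + 2) := by
        rw [rho, h1, heq]
      have hinv : (zs (k + 1) - f (k + 1))⁻¹ ≠ 0 := inv_ne_zero hsub
      have hfac : -((rho f k z - f (k + 1))⁻¹) ^ 2 ≠ 0 := by
        rw [h1]; simp [hsub]
      refine ⟨hr1, ?_, ?_⟩
      · show -((rho f k z - f (k + 1))⁻¹) ^ 2 * rho' f k z ≠ 0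
        exact mul_ne_zero hfac h2
      · show P.ν (-((rho f k z - f (k + 1))⁻¹) ^ 2 * rho' f k z) = _
        rw [P.ν_mul _ _ hfac h2, h1, hνsq _ hinv, ← heq, h3,
          Finset.sum_Icc_succ_top (by omega : 1 ≤ k + 1 + 1)]
        ring
  obtain ⟨hr, hr'ne, hr'ν⟩ := main n le_rfl
  obtain ⟨hzn1, hνzn1⟩ := hz (n + 1) (by omega) le_rfl
  -- ν (f k) = ν (zs k) for 1 ≤ k ≤ n+1
  have hfv : ∀ k, 1 ≤ k → k ≤ n + 1 → P.ν (f k) = P.ν (zs k) := by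
    intro k hk1 hk2
    obtain ⟨hne, hneg⟩ := hz k hk1 hk2
    apply key _ _ hne hneg
    rcases lt_or_ge k (n + 1) with h | h
    · obtain ⟨_, hpos, _, _⟩ := hstep k (by omega)
      exact Or.inr hpos
    · have : k = n + 1 := by omega
      subst this
      exact hcn
  -- final computation
  have hsum : ∑ i ∈ Finset.Icc 1 n, P.deg (f i) =
      -∑ i ∈ Finset.Icc 1 n, P.ν (zs i) := by
    rw [← Finset.sum_neg_distrib]
    apply Finset.sum_congr rfl
    intro i hi
    rw [Finset.mem_Icc] at hi
    rw [PuiseuxCompletion.deg, hfv i hi.1 (by omega)]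
  have hdegn : P.deg (f (n + 1)) = -P.ν (zs (n + 1)) := by
    rw [PuiseuxCompletion.deg, hfv (n + 1) (by omega) le_rfl]
  have hexp : ∑ i ∈ Finset.Icc 1 (n + 1), 2 * P.ν (zs i) =
      2 * ∑ i ∈ Finset.Icc 1 n, P.ν (zs i) + 2 * P.ν (zs (n + 1)) := by
    rw [Finset.sum_Icc_succ_top (by omega : 1 ≤ n + 1), Finset.mul_sum]
  rw [div_eq_mul_inv, P.ν_mul _ _ (by rw [hr]; exact hzn1) (inv_ne_zero hr'ne),
    hνinv _ hr'ne, hr, hr'ν, hexp, hdegn, hsum]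
  ring
end

section
/- Let z ∈ Ĥ whose continued fraction algorithm does not end before defining z_{n+1}, and let x_n(z) = [f₀, f₁, …, f_n] be its n-th approximant. Then ν(z - x_n(z)) = deg(f_{n+1}) + 2·Σ_{i=1}^{n} deg(f_i). -/
universe u

namespace PuiseuxCompletion

variable {E : Type u} [Field E] (P : PuiseuxCompletion E)

lemma nu_one : P.ν 1 = 0 := by
  have h := P.ν_mono 0
  rw [P.mono_zero] at h
  simpa using h

lemma nu_neg_one : P.ν (-1 : P.K) = 0 := by
  have h : ((-1 : P.K)) * (-1) = 1 := by ring
  have h2 := P.ν_mul (-1) (-1) (by norm_num) (by norm_num)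
  rw [h, P.nu_one] at h2
  linarith

lemma nu_neg {x : P.K} (hx : x ≠ 0) : P.ν (-x) = P.ν x := by
  have h := P.ν_mul (-1) x (by norm_num) hx
  rw [P.nu_neg_one] at h
  simpa using h

lemma nu_inv {x : P.K} (hx : x ≠ 0) : P.ν x⁻¹ = -P.ν x := by
  have h := P.ν_mul x x⁻¹ hx (inv_ne_zero hx)
  rw [mul_inv_cancel₀ hx, P.nu_one] at h
  linarith

lemma nu_add_eq_left {x y : P.K} (hx : x ≠ 0) (hy : y ≠ 0)
    (h : P.ν x < P.ν y) : x + y ≠ 0 ∧ P.ν (x + y) = P.ν x := by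
  have hxy : x + y ≠ 0 := by
    intro he
    have hyx : y = -x := by linear_combination he
    rw [hyx, P.nu_neg hx] at h
    exact lt_irrefl _ h
  refine ⟨hxy, le_antisymm ?_ ?_⟩
  · have h2 := P.ν_add (x + y) (-y) hxy (neg_ne_zero.mpr hy)
      (by rw [add_neg_cancel_right]; exact hx)
    rw [add_neg_cancel_right, P.nu_neg hy] at h2
    by_contra hc
    push_neg at hc
    exact lt_irrefl _ (lt_of_lt_of_le (lt_min hc h) h2)
  · have h1 := P.ν_add x y hx hy hxy
    rw [min_eq_left h.le] at h1
    exact h1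

/-- If `ν a < ν (a - b)` then `ν b = ν a`. -/
lemma nu_eq_of {a b : P.K} (ha : a ≠ 0) (hne : a ≠ b)
    (hν : P.ν a < P.ν (a - b)) : P.ν b = P.ν a := by
  have hsub : a - b ≠ 0 := sub_ne_zero.mpr hne
  have h := P.nu_add_eq_left ha (neg_ne_zero.mpr hsub)
    (by rw [P.nu_neg hsub]; exact hν)
  have he : a + -(a - b) = b := by ring
  rw [he] at h
  exact h.2

lemma step_nu {f zs : ℕ → P.K} {i : ℕ} (h : P.CFStep f zs i) :
    zs (i + 1) ≠ 0 ∧ P.ν (zs (i + 1)) = -P.ν (zs i - f i) := by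
  obtain ⟨-, hpos, hne, heq⟩ := h
  have hsub : zs i - f i ≠ 0 := sub_ne_zero.mpr hne
  exact ⟨by rw [heq]; exact inv_ne_zero hsub, by rw [heq, P.nu_inv hsub]⟩

lemma sum_Icc_shift (h : ℕ → ℚ) :
    ∀ n : ℕ, ∑ i ∈ Finset.Icc 1 n, h i = ∑ i ∈ Finset.range n, h (i + 1) := by
  intro n
  induction n with
  | zero => simp
  | succ n ih =>
      rw [Finset.sum_Icc_succ_top (Nat.succ_le_succ (Nat.zero_le n)),
        Finset.sum_range_succ, ih]

lemma approx_zero (f : ℕ → P.K) : P.approx f 0 = f 0 := by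
  simp [approx, cfEval]

lemma approx_succ (f : ℕ → P.K) (n : ℕ) :
    P.approx f (n + 1) = f 0 + (P.approx (fun i => f (i + 1)) n)⁻¹ := by
  rw [approx, List.ofFn_succ]
  rfl

lemma key : ∀ (n : ℕ) (f zs : ℕ → P.K), (∀ i ≤ n, P.CFStep f zs i) →
    zs 0 - P.approx f n ≠ 0 ∧
    P.ν (zs 0 - P.approx f n) =
      -P.ν (zs (n + 1)) + 2 * ∑ i ∈ Finset.Icc 1 n, (-P.ν (zs i)) := by
  intro n
  induction n with
  | zero =>
      intro f zs h
      obtain ⟨-, hpos, hne, heq⟩ := h 0 le_rfl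
      have hsub : zs 0 - f 0 ≠ 0 := sub_ne_zero.mpr hne
      rw [P.approx_zero]
      refine ⟨hsub, ?_⟩
      rw [heq, P.nu_inv hsub]
      simp
  | succ n ih =>
      intro f zs h
      obtain ⟨ihne, iheq⟩ := ih (fun i => f (i + 1)) (fun i => zs (i + 1))
        (fun i hi => h (i + 1) (Nat.succ_le_succ hi))
      set x := P.approx (fun i => f (i + 1)) n with hxdef
      -- basic facts from step 0
      obtain ⟨-, hpos0, hne0, heq0⟩ := h 0 (Nat.zero_le _)
      have hsub0 : zs 0 - f 0 ≠ 0 := sub_ne_zero.mpr hne0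
      have hz1ne : zs 1 ≠ 0 := by rw [heq0]; exact inv_ne_zero hsub0
      have hz1ν : P.ν (zs 1) = -P.ν (zs 0 - f 0) := by rw [heq0, P.nu_inv hsub0]
      have hz1neg : P.ν (zs 1) < 0 := by rw [hz1ν]; linarith
      -- ν (zs i) < 0 for the shifted indices
      have hwpos : ∀ i ≤ n + 1, P.ν (zs (i + 1)) < 0 := by
        intro i hi
        have hs := h i hi
        have h2 := (P.step_nu hs).2
        have h3 := hs.2.1
        linarith
      -- positivity of D := ν (zs 1 - x)
      have hsum_pos : 0 ≤ ∑ i ∈ Finset.Icc 1 n, (-P.ν (zs (i + 1))) := by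
        refine Finset.sum_nonneg fun i hi => ?_
        rw [Finset.mem_Icc] at hi
        have := hwpos i (le_trans hi.2 (Nat.le_succ n))
        linarith
      have hD : 0 < P.ν (zs 1 - x) := by
        rw [iheq]
        have := hwpos (n + 1) le_rfl
        linarith
      have hz1x : zs 1 ≠ x := fun he => ihne (by rw [he, sub_self])
      -- x ≠ 0
      have hxne : x ≠ 0 := by
        intro he
        rw [he, sub_zero] at hD
        linarith
      -- ν x = ν (zs 1)
      have hνx : P.ν x = P.ν (zs 1) :=
        P.nu_eq_of hz1ne hz1x (by linarith)
      -- factorization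
      have hfac : zs 0 - P.approx f (n + 1) = (x - zs 1) * ((zs 1)⁻¹ * x⁻¹) := by
        rw [P.approx_succ, ← hxdef]
        have hinv : (zs 1)⁻¹ = zs 0 - f 0 := by rw [heq0, inv_inv]
        have h2 : (x - zs 1) * ((zs 1)⁻¹ * x⁻¹)
            = (x * x⁻¹) * (zs 1)⁻¹ - (zs 1 * (zs 1)⁻¹) * x⁻¹ := by ring
        rw [h2, mul_inv_cancel₀ hxne, mul_inv_cancel₀ hz1ne, one_mul, one_mul, hinv]
        ring
      have hxz1ne : x - zs 1 ≠ 0 := fun he => hz1x (by linear_combination -he)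
      have hprodne : (zs 1)⁻¹ * x⁻¹ ≠ 0 :=
        mul_ne_zero (inv_ne_zero hz1ne) (inv_ne_zero hxne)
      have hne' : zs 0 - P.approx f (n + 1) ≠ 0 := by
        rw [hfac]; exact mul_ne_zero hxz1ne hprodne
      refine ⟨hne', ?_⟩
      have hν1 : P.ν (x - zs 1) = P.ν (zs 1 - x) := by
        rw [show x - zs 1 = -(zs 1 - x) by ring, P.nu_neg (sub_ne_zero.mpr hz1x)]
      calc P.ν (zs 0 - P.approx f (n + 1))
          = P.ν (x - zs 1) + P.ν ((zs 1)⁻¹ * x⁻¹) := by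
            rw [hfac]; exact P.ν_mul _ _ hxz1ne hprodne
        _ = P.ν (zs 1 - x) + (-P.ν (zs 1) + -P.ν x) := by
            rw [hν1, P.ν_mul _ _ (inv_ne_zero hz1ne) (inv_ne_zero hxne),
              P.nu_inv hz1ne, P.nu_inv hxne]
        _ = -P.ν (zs (n + 1 + 1)) + 2 * ∑ i ∈ Finset.Icc 1 (n + 1), (-P.ν (zs i)) := by
            rw [iheq, hνx]
            rw [sum_Icc_shift, sum_Icc_shift, Finset.sum_range_succ']
            ring

end PuiseuxCompletion

open PuiseuxCompletion in
/-- `ν (z - x_n(z)) = deg f_{n+1} + 2 Σ_{i=1}^n deg f_i` whenever the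
continued fraction algorithm of `z` does not end before defining `z_{n+1}`. -/
theorem statement4 {E : Type u} [Field E] (P : PuiseuxCompletion E)
    (z : P.K) (f zs : ℕ → P.K) (n : ℕ)
    (h0 : zs 0 = z) (hstep : ∀ i ≤ n, P.CFStep f zs i)
    (hfn : f (n + 1) ∈ P.Abar)
    (hcn : zs (n + 1) = f (n + 1) ∨ 0 < P.ν (zs (n + 1) - f (n + 1))) :
    P.ν (z - P.approx f n) =
      P.deg (f (n + 1)) + 2 * ∑ i ∈ Finset.Icc 1 n, P.deg (f i) := by
  obtain ⟨hne, heq⟩ := P.key n f zs hstep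
  rw [← h0, heq]
  have hlast : -P.ν (zs (n + 1)) = P.deg (f (n + 1)) := by
    have hs := hstep n le_rfl
    have hzne : zs (n + 1) ≠ 0 := (P.step_nu hs).1
    have hzν : P.ν (zs (n + 1)) < 0 := by
      have h2 := (P.step_nu hs).2
      linarith [hs.2.1]
    by_cases hc : zs (n + 1) = f (n + 1)
    · rw [deg, ← hc]
    · rcases hcn with hc' | hc'
      · exact absurd hc' hc
      · have h3 := P.nu_eq_of hzne hc (by linarith)
        rw [deg, h3]
  have hterm : ∀ i ∈ Finset.Icc 1 n, -P.ν (zs i) = P.deg (f i) := by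
    intro i hi
    rw [Finset.mem_Icc] at hi
    obtain ⟨j, rfl⟩ : ∃ j, i = j + 1 := ⟨i - 1, by omega⟩
    have hsj := hstep j (by omega)
    have hzne : zs (j + 1) ≠ 0 := (P.step_nu hsj).1
    have hzν : P.ν (zs (j + 1)) < 0 := by
      have h2 := (P.step_nu hsj).2
      linarith [hsj.2.1]
    have hsi := hstep (j + 1) hi.2
    have h3 := P.nu_eq_of hzne hsi.2.2.1 (by linarith [hsi.2.1])
    rw [deg, h3]
  rw [hlast, Finset.sum_congr rfl hterm]
end

section
/- (Best approximation) Let z ∈ Ĥ and let p, q ∈ Ā with q ≠ 0 satisfy ν(z - p/q) > -2ν(q) = 2 deg(q). Then p/q equals an approximant x_n(z) of z for some n ≥ 0. -/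
universe u

namespace PuiseuxCompletion

variable {E : Type u} [Field E] (P : PuiseuxCompletion E)

lemma mono_ne_zero (r : ℚ) : P.mono r ≠ 0 := by
  intro h
  have h1 : P.mono r * P.mono (-r) = 1 := by rw [P.mono_mul, add_neg_cancel, P.mono_zero]
  rw [h, zero_mul] at h1
  exact zero_ne_one h1

lemma nu_div {x y : P.K} (hx : x ≠ 0) (hy : y ≠ 0) : P.ν (x / y) = P.ν x - P.ν y := by
  rw [div_eq_mul_inv, P.ν_mul x y⁻¹ hx (inv_ne_zero hy), P.nu_inv hy]; ring

lemma emb_ne_zero {e : E} (he : e ≠ 0) : P.emb e ≠ 0 := by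
  intro h
  have h1 : P.emb e * P.emb e⁻¹ = 1 := by rw [← map_mul, mul_inv_cancel₀ he, map_one]
  rw [h, zero_mul] at h1
  exact zero_ne_one h1

lemma nu_add_eq {a b : P.K} (ha : a ≠ 0) (hb : b ≠ 0) (h : P.ν a < P.ν b) :
    a + b ≠ 0 ∧ P.ν (a + b) = P.ν a := by
  have hab : a + b ≠ 0 := by
    intro he
    have he' : a = -b := eq_neg_of_add_eq_zero_left he
    rw [he', P.nu_neg hb] at h
    exact lt_irrefl _ h
  refine ⟨hab, le_antisymm ?_ ?_⟩
  · by_contra hlt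
    push_neg at hlt
    have h2 := P.ν_add (a + b) (-b) hab (neg_ne_zero.mpr hb)
      (by rw [add_neg_cancel_right]; exact ha)
    rw [add_neg_cancel_right, P.nu_neg hb] at h2
    rcases min_le_iff.mp h2 with h3 | h3 <;> linarith
  · have h1 := P.ν_add a b ha hb hab
    rw [min_eq_left h.le] at h1
    exact h1

lemma mono_pow (r : ℚ) (n : ℕ) : P.mono r ^ n = P.mono (n * r) := by
  induction n with
  | zero => simp [P.mono_zero]
  | succ n ih =>
    rw [pow_succ, ih, P.mono_mul]
    congr 1; push_cast; ring

/-- Evaluation `E[X] → K`, `X ↦ t^{1/M}`. -/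
noncomputable def phi (M : ℕ) : Polynomial E →+* P.K :=
  Polynomial.eval₂RingHom P.emb (P.mono (1 / (M : ℚ)))

lemma phi_C (M : ℕ) (a : E) : P.phi M (Polynomial.C a) = P.emb a :=
  Polynomial.eval₂_C _ _

lemma phi_X (M : ℕ) : P.phi M Polynomial.X = P.mono (1 / (M : ℚ)) :=
  Polynomial.eval₂_X _ _

lemma phi_C_mul_X_pow (M : ℕ) (a : E) (d : ℕ) :
    P.phi M (Polynomial.C a * Polynomial.X ^ d) = P.emb a * P.mono ((d : ℚ) / (M : ℚ)) := by
  rw [map_mul, map_pow, phi_C, phi_X, P.mono_pow, mul_one_div]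

lemma phi_mem (M : ℕ) (pl : Polynomial E) : P.phi M pl ∈ P.Abar := by
  induction pl using Polynomial.induction_on with
  | C a => rw [phi_C]; exact Subring.subset_closure (Or.inl ⟨a, rfl⟩)
  | add p q hp hq => rw [map_add]; exact add_mem hp hq
  | monomial n a ih =>
    have h : Polynomial.C a * Polynomial.X ^ (n + 1)
        = Polynomial.C a * Polynomial.X ^ n * Polynomial.X := by ring
    rw [h, map_mul, phi_X]
    refine mul_mem ih (Subring.subset_closure (Or.inr ⟨1 / (M : ℚ), ?_, rfl⟩))
    show (0 : ℚ) ≤ 1 / (M : ℚ)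
    positivity

lemma nu_phi (M : ℕ) (hM : 0 < M) : ∀ (n : ℕ) (pl : Polynomial E), pl.natDegree ≤ n → pl ≠ 0 →
    P.phi M pl ≠ 0 ∧ P.ν (P.phi M pl) = -(pl.natDegree : ℚ) / (M : ℚ) := by
  have hMQ : (0 : ℚ) < (M : ℚ) := by exact_mod_cast hM
  have hlead : ∀ a : E, a ≠ 0 → ∀ d : ℕ,
      P.phi M (Polynomial.C a * Polynomial.X ^ d) ≠ 0 ∧
      P.ν (P.phi M (Polynomial.C a * Polynomial.X ^ d)) = -(d : ℚ) / (M : ℚ) := by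
    intro a ha d
    rw [P.phi_C_mul_X_pow]
    refine ⟨mul_ne_zero (P.emb_ne_zero ha) (P.mono_ne_zero _), ?_⟩
    rw [P.ν_mul _ _ (P.emb_ne_zero ha) (P.mono_ne_zero _), P.ν_emb a ha, P.ν_mono, zero_add,
      neg_div]
  intro n
  induction n with
  | zero =>
    intro pl hdeg h0
    have hd0 : pl.natDegree = 0 := Nat.le_zero.mp hdeg
    obtain ⟨a, rfl⟩ := Polynomial.natDegree_eq_zero.mp hd0
    have ha : a ≠ 0 := fun h => h0 (by rw [h, map_zero])
    have h := hlead a ha 0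
    rw [pow_zero, mul_one] at h
    rw [hd0]
    exact h
  | succ n ih =>
    intro pl hdeg h0
    have ha : pl.leadingCoeff ≠ 0 := Polynomial.leadingCoeff_ne_zero.mpr h0
    by_cases he : pl.eraseLead = 0
    · have hpl : pl = Polynomial.C pl.leadingCoeff * Polynomial.X ^ pl.natDegree := by
        conv_lhs => rw [← Polynomial.eraseLead_add_C_mul_X_pow pl]
        rw [he, zero_add]
      obtain ⟨h1, h2⟩ := hlead _ ha pl.natDegree
      refine ⟨by rw [hpl]; exact h1, ?_⟩
      calc P.ν (P.phi M pl)
          = P.ν (P.phi M (Polynomial.C pl.leadingCoeff * Polynomial.X ^ pl.natDegree)) := by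
            rw [← hpl]
        _ = -(pl.natDegree : ℚ) / (M : ℚ) := h2
    · have hdlt : pl.eraseLead.natDegree < pl.natDegree :=
        Polynomial.natDegree_lt_natDegree he (Polynomial.degree_eraseLead_lt h0)
      obtain ⟨hih1, hih2⟩ := ih pl.eraseLead (by omega) he
      obtain ⟨h1, h2⟩ := hlead _ ha pl.natDegree
      have hord : P.ν (P.phi M (Polynomial.C pl.leadingCoeff * Polynomial.X ^ pl.natDegree))
          < P.ν (P.phi M pl.eraseLead) := by
        rw [h2, hih2, div_eq_mul_inv, div_eq_mul_inv]
        apply mul_lt_mul_of_pos_right _ (by positivity)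
        have hc : (pl.eraseLead.natDegree : ℚ) < (pl.natDegree : ℚ) := by exact_mod_cast hdlt
        linarith
      have hsum := P.nu_add_eq h1 hih1 hord
      have heq : P.phi M pl
          = P.phi M (Polynomial.C pl.leadingCoeff * Polynomial.X ^ pl.natDegree)
            + P.phi M pl.eraseLead := by
        rw [← map_add, add_comm, Polynomial.eraseLead_add_C_mul_X_pow]
      rw [heq]
      exact ⟨hsum.1, by rw [hsum.2, h2]⟩

lemma phi_comp (M₁ M₂ : ℕ) (hM₁ : 0 < M₁) (hM₂ : 0 < M₂) (pl : Polynomial E) :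
    P.phi (M₁ * M₂) (pl.comp (Polynomial.X ^ M₂)) = P.phi M₁ pl := by
  have hM₁Q : ((M₁ : ℚ)) ≠ 0 := by positivity
  have hM₂Q : ((M₂ : ℚ)) ≠ 0 := by positivity
  show Polynomial.eval₂ _ _ _ = Polynomial.eval₂ _ _ _
  rw [Polynomial.eval₂_comp, Polynomial.eval₂_X_pow, P.mono_pow]
  congr 2
  push_cast
  field_simp

lemma Abar_poly {x : P.K} (hx : x ∈ P.Abar) :
    ∃ M : ℕ, 0 < M ∧ ∃ pl : Polynomial E, x = P.phi M pl := by
  have hx' : x ∈ Subring.closure (Set.range P.emb ∪ P.mono '' {r : ℚ | 0 ≤ r}) := hx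
  clear hx
  induction hx' using Subring.closure_induction with
  | mem y hy =>
    rcases hy with ⟨e, rfl⟩ | ⟨r, hr, rfl⟩
    · exact ⟨1, one_pos, Polynomial.C e, by rw [phi_C]⟩
    · refine ⟨r.den, r.pos, Polynomial.X ^ r.num.toNat, ?_⟩
      rw [map_pow, phi_X, P.mono_pow, mul_one_div]
      congr 1
      have h0 : (0 : ℤ) ≤ r.num := Rat.num_nonneg.mpr hr
      have hc : ((r.num.toNat : ℕ) : ℚ) = (r.num : ℚ) := by
        exact_mod_cast congrArg (Int.cast : ℤ → ℚ) (Int.toNat_of_nonneg h0)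
      rw [hc, Rat.num_div_den]
  | zero => exact ⟨1, one_pos, 0, by rw [map_zero]⟩
  | one => exact ⟨1, one_pos, 1, by rw [map_one]⟩
  | add x y hx1 hy1 ihx ihy =>
    obtain ⟨M₁, hM₁, pl₁, rfl⟩ := ihx
    obtain ⟨M₂, hM₂, pl₂, rfl⟩ := ihy
    refine ⟨M₁ * M₂, Nat.mul_pos hM₁ hM₂,
      pl₁.comp (Polynomial.X ^ M₂) + pl₂.comp (Polynomial.X ^ M₁), ?_⟩
    have e2 : P.phi (M₁ * M₂) (pl₂.comp (Polynomial.X ^ M₁)) = P.phi M₂ pl₂ := by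
      have h := P.phi_comp M₂ M₁ hM₂ hM₁ pl₂
      rwa [mul_comm M₂ M₁] at h
    rw [map_add, P.phi_comp M₁ M₂ hM₁ hM₂, e2]
  | neg x hx1 ihx =>
    obtain ⟨M₁, hM₁, pl₁, rfl⟩ := ihx
    exact ⟨M₁, hM₁, -pl₁, by rw [map_neg]⟩
  | mul x y hx1 hy1 ihx ihy =>
    obtain ⟨M₁, hM₁, pl₁, rfl⟩ := ihx
    obtain ⟨M₂, hM₂, pl₂, rfl⟩ := ihy
    refine ⟨M₁ * M₂, Nat.mul_pos hM₁ hM₂,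
      pl₁.comp (Polynomial.X ^ M₂) * pl₂.comp (Polynomial.X ^ M₁), ?_⟩
    have e2 : P.phi (M₁ * M₂) (pl₂.comp (Polynomial.X ^ M₁)) = P.phi M₂ pl₂ := by
      have h := P.phi_comp M₂ M₁ hM₂ hM₁ pl₂
      rwa [mul_comm M₂ M₁] at h
    rw [map_mul, P.phi_comp M₁ M₂ hM₁ hM₂, e2]

lemma key_exact (z f₀ : P.K) (hf₀ : f₀ ∈ P.Abar) (hz : z = f₀ ∨ 0 < P.ν (z - f₀)) :
    ∃ (n : ℕ) (f zs : ℕ → P.K), zs 0 = z ∧ (∀ i < n, P.CFStep f zs i) ∧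
      f n ∈ P.Abar ∧ (zs n = f n ∨ 0 < P.ν (zs n - f n)) ∧ f₀ = P.approx f n := by
  refine ⟨0, fun _ => f₀, fun _ => z, rfl, fun i hi => absurd hi (Nat.not_lt_zero i),
    hf₀, hz, ?_⟩
  rw [P.approx_zero]

lemma key_glue (z S : P.K) (hS : S ∈ P.Abar) (hzS0 : z ≠ S) (hνzS : 0 < P.ν (z - S))
    (m : ℕ) (f' zs' : ℕ → P.K) (h1 : zs' 0 = (z - S)⁻¹) (h2 : ∀ i < m, P.CFStep f' zs' i)
    (h3 : f' m ∈ P.Abar) (h4 : zs' m = f' m ∨ 0 < P.ν (zs' m - f' m)) :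
    ∃ (n : ℕ) (f zs : ℕ → P.K), zs 0 = z ∧ (∀ i < n, P.CFStep f zs i) ∧
      f n ∈ P.Abar ∧ (zs n = f n ∨ 0 < P.ν (zs n - f n)) ∧
      P.approx f n = S + (P.approx f' m)⁻¹ := by
  refine ⟨m + 1, fun i => match i with | 0 => S | j + 1 => f' j,
    fun i => match i with | 0 => z | j + 1 => zs' j, rfl, ?_, h3, h4, ?_⟩
  · intro i hi
    match i with
    | 0 => exact ⟨hS, hνzS, hzS0, h1⟩
    | j + 1 => exact h2 j (by omega)
  · rw [P.approx_succ]

lemma key_s12 (M : ℕ) (hM : 0 < M) : ∀ (d : ℕ) (pl ql : Polynomial E), ql ≠ 0 →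
    ql.natDegree ≤ d → ∀ z : P.K,
    (z = P.phi M pl / P.phi M ql ∨
      2 * P.deg (P.phi M ql) < P.ν (z - P.phi M pl / P.phi M ql)) →
    ∃ (n : ℕ) (f zs : ℕ → P.K), zs 0 = z ∧ (∀ i < n, P.CFStep f zs i) ∧
      f n ∈ P.Abar ∧ (zs n = f n ∨ 0 < P.ν (zs n - f n)) ∧
      P.phi M pl / P.phi M ql = P.approx f n := by
  have hMQ : (0 : ℚ) < (M : ℚ) := by exact_mod_cast hM
  intro d
  induction d using Nat.strong_induction_on with
  | _ d ih =>
    intro pl ql hql hdeg z hz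
    set Q := P.phi M ql with hQdef
    set Pp := P.phi M pl with hPdef
    obtain ⟨hQ0, hQν⟩ := P.nu_phi M hM ql.natDegree ql le_rfl hql
    set s := pl / ql with hsdef
    set r := pl % ql with hrdef
    have hdiv : ql * s + r = pl := EuclideanDomain.div_add_mod pl ql
    set S := P.phi M s with hSdef
    set Rr := P.phi M r with hRdef
    have hPQS : Pp = Q * S + Rr := by rw [hPdef, ← hdiv, map_add, map_mul]
    have hSmem : S ∈ P.Abar := P.phi_mem M s
    have hdegQ0 : 0 ≤ P.deg Q := by
      show 0 ≤ -P.ν Q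
      rw [hQν, neg_div, neg_neg]
      positivity
    by_cases hr : r = 0
    · -- exact division
      have hPS : Pp / Q = S := by
        rw [hPQS, hRdef, hr, map_zero, add_zero, mul_comm, mul_div_assoc,
          div_self hQ0, mul_one]
      rw [hPS] at hz
      obtain ⟨n, f, zs, a1, a2, a3, a4, a5⟩ := P.key_exact z S hSmem
        (by rcases hz with hz | hz
            · exact Or.inl hz
            · exact Or.inr (by linarith))
      exact ⟨n, f, zs, a1, a2, a3, a4, by rw [hPS]; exact a5⟩
    · -- r ≠ 0
      have hdr : (pl % ql).degree < ql.degree := EuclideanDomain.mod_lt _ hql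
      have hdrn : r.natDegree < ql.natDegree := Polynomial.natDegree_lt_natDegree hr hdr
      obtain ⟨hR0, hRν⟩ := P.nu_phi M hM r.natDegree r le_rfl hr
      have hcast : (r.natDegree : ℚ) < (ql.natDegree : ℚ) := by exact_mod_cast hdrn
      have hνRQ : P.ν Q < P.ν Rr := by
        rw [hQν, hRν, div_eq_mul_inv, div_eq_mul_inv]
        apply mul_lt_mul_of_pos_right _ (by positivity)
        linarith
      have hνQ0 : P.ν Q < 0 := by
        rw [hQν, neg_div]
        refine neg_lt_zero.mpr (div_pos ?_ hMQ)
        exact_mod_cast (by omega : 0 < ql.natDegree)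
      have hνR0 : P.ν Rr ≤ 0 := by
        rw [hRν, neg_div]
        exact neg_nonpos.mpr (div_nonneg (by positivity) hMQ.le)
      have hRQ : Rr / Q ≠ 0 := div_ne_zero hR0 hQ0
      have hνRQdiv : P.ν (Rr / Q) = P.ν Rr - P.ν Q := P.nu_div hR0 hQ0
      have hPQ : Pp / Q = S + Rr / Q := by
        rw [hPQS, add_div, mul_comm, mul_div_assoc, div_self hQ0, mul_one]
      by_cases hze : z = Pp / Q
      · -- z is exactly Pp/Q
        have hzS : z - S = Rr / Q := by rw [hze, hPQ]; ring
        have hzS0 : z - S ≠ 0 := by rw [hzS]; exact hRQ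
        have hνzS : 0 < P.ν (z - S) := by rw [hzS, hνRQdiv]; linarith
        have hz1 : (z - S)⁻¹ = Q / Rr := by rw [hzS, inv_div]
        obtain ⟨m, f', zs', h1, h2, h3, h4, h5⟩ := ih r.natDegree (by omega) ql r hr le_rfl
          ((z - S)⁻¹) (Or.inl (by rw [hz1]))
        obtain ⟨n, f, zs, a1, a2, a3, a4, a5⟩ := P.key_glue z S hSmem
          (sub_ne_zero.mp hzS0) hνzS m f' zs' h1 h2 h3 h4
        refine ⟨n, f, zs, a1, a2, a3, a4, ?_⟩
        rw [hPQ, a5, ← h5, inv_div]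
      · have hν : 2 * P.deg Q < P.ν (z - Pp / Q) := hz.resolve_left hze
        have hw0 : z - Pp / Q ≠ 0 := sub_ne_zero.mpr hze
        have hdegQν : P.deg Q = -P.ν Q := rfl
        have hord : P.ν (Rr / Q) < P.ν (z - Pp / Q) := by
          rw [hνRQdiv]
          rw [hdegQν] at hν
          linarith
        have hzSeq : z - S = Rr / Q + (z - Pp / Q) := by rw [hPQ]; ring
        obtain ⟨hzS0', hνzS'⟩ := P.nu_add_eq hRQ hw0 hord
        have hzS0 : z - S ≠ 0 := by rw [hzSeq]; exact hzS0'
        have hνzS : P.ν (z - S) = P.ν Rr - P.ν Q := by rw [hzSeq, hνzS', hνRQdiv]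
        have hνzSpos : 0 < P.ν (z - S) := by rw [hνzS]; linarith
        have hnum : Pp - Q * z ≠ 0 := by
          intro hcon
          apply hze
          have h1 : Pp = Q * z := by linear_combination hcon
          rw [h1, mul_comm, mul_div_assoc, div_self hQ0, mul_one]
        have hQPp : Q * (Pp / Q) = Pp := by
          rw [mul_comm]
          exact div_mul_cancel₀ Pp hQ0
        have hkey : (z - S)⁻¹ - Q / Rr = (Pp - Q * z) / ((z - S) * Rr) := by
          rw [inv_eq_one_div, div_sub_div _ _ hzS0 hR0, div_eq_div_iff
            (mul_ne_zero hzS0 hR0) (mul_ne_zero hzS0 hR0)]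
          have hQS : Q * S = Pp - Rr := by rw [hPQS]; ring
          ring_nf
          linear_combination ((z - S) * Rr) * hQS
        have hνnum : P.ν (Pp - Q * z) = P.ν Q + P.ν (z - Pp / Q) := by
          have hfac : Pp - Q * z = Q * -(z - Pp / Q) := by
            rw [mul_neg, mul_sub, hQPp]; ring
          rw [hfac, P.ν_mul _ _ hQ0 (neg_ne_zero.mpr hw0), P.nu_neg hw0]
        have hb : 2 * P.deg Rr < P.ν ((z - S)⁻¹ - Q / Rr) := by
          rw [hkey, P.nu_div hnum (mul_ne_zero hzS0 hR0), hνnum,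
            P.ν_mul _ _ hzS0 hR0, hνzS]
          show 2 * -P.ν Rr < _
          rw [hdegQν] at hν
          linarith
        obtain ⟨m, f', zs', h1, h2, h3, h4, h5⟩ := ih r.natDegree (by omega) ql r hr le_rfl
          ((z - S)⁻¹) (Or.inr hb)
        obtain ⟨n, f, zs, a1, a2, a3, a4, a5⟩ := P.key_glue z S hSmem
          (sub_ne_zero.mp hzS0) hνzSpos m f' zs' h1 h2 h3 h4
        refine ⟨n, f, zs, a1, a2, a3, a4, ?_⟩
        rw [hPQ, a5, ← h5, inv_div]

end PuiseuxCompletion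

open PuiseuxCompletion in
/-- best approximation: if `p, q ∈ Ā`, `q ≠ 0` and
`ν (z - p/q) > 2 deg q = -2 ν q`, then `p/q` is an approximant `x_n(z)`. -/
theorem statement12 {E : Type u} [Field E] (P : PuiseuxCompletion E)
    (z p q : P.K) (hp : p ∈ P.Abar) (hq : q ∈ P.Abar) (hq0 : q ≠ 0)
    (h : z = p / q ∨ 2 * P.deg q < P.ν (z - p / q)) :
    ∃ (n : ℕ) (f zs : ℕ → P.K), zs 0 = z ∧ (∀ i < n, P.CFStep f zs i) ∧
      f n ∈ P.Abar ∧ (zs n = f n ∨ 0 < P.ν (zs n - f n)) ∧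
      p / q = P.approx f n := by
  obtain ⟨M₁, hM₁, pl₁, rfl⟩ := P.Abar_poly hp
  obtain ⟨M₂, hM₂, ql₂, rfl⟩ := P.Abar_poly hq
  have e1 : P.phi (M₁ * M₂) (pl₁.comp (Polynomial.X ^ M₂)) = P.phi M₁ pl₁ :=
    P.phi_comp M₁ M₂ hM₁ hM₂ pl₁
  have e2 : P.phi (M₁ * M₂) (ql₂.comp (Polynomial.X ^ M₁)) = P.phi M₂ ql₂ := by
    have h2 := P.phi_comp M₂ M₁ hM₂ hM₁ ql₂
    rwa [mul_comm M₂ M₁] at h2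
  have hql : ql₂.comp (Polynomial.X ^ M₁) ≠ 0 := by
    intro hcon
    apply hq0
    rw [← e2, hcon, map_zero]
  obtain ⟨n, f, zs, a1, a2, a3, a4, a5⟩ := P.key_s12 (M₁ * M₂) (Nat.mul_pos hM₁ hM₂)
    ((ql₂.comp (Polynomial.X ^ M₁)).natDegree) (pl₁.comp (Polynomial.X ^ M₂))
    (ql₂.comp (Polynomial.X ^ M₁)) hql le_rfl z (by rw [e1, e2]; exact h)
  refine ⟨n, f, zs, a1, a2, a3, a4, ?_⟩
  rw [← e1, ← e2]
  exact a5
end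

section
/- On the set H of pairs (a, r) ∈ Ĥ × ℝ modulo the equivalence (a, r) ~ (a', r) iff ν(a - a') ≥ r, define d(η_{a,r}, η_{a',r'}) = |r - r'| if ν(a - a') ≥ min(r, r'), and d = r + r' - 2ν(a - a') otherwise. Then d is a well-defined metric on H. -/
universe u

namespace PuiseuxCompletion

variable {E : Type u} [Field E] (P : PuiseuxCompletion E)

lemma nu_sub_symm {a b : P.K} (h : a ≠ b) : P.ν (a - b) = P.ν (b - a) := by
  rw [← neg_sub b a, nu_neg P (sub_ne_zero.mpr (Ne.symm h))]

/-- `x = 0` or `ν x ≥ c`. -/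
def nuGe (x : P.K) (c : ℝ) : Prop := x = 0 ∨ c ≤ (P.ν x : ℝ)

lemma nuGe_zero (c : ℝ) : P.nuGe 0 c := Or.inl rfl

lemma nuGe_mono {x : P.K} {c c' : ℝ} (h : P.nuGe x c) (hcc : c' ≤ c) : P.nuGe x c' := by
  rcases h with h | h
  · exact Or.inl h
  · exact Or.inr (le_trans hcc h)

lemma nuGe_neg {x : P.K} {c : ℝ} (h : P.nuGe x c) : P.nuGe (-x) c := by
  by_cases hx : x = 0
  · subst hx; simpa using P.nuGe_zero c
  · rcases h with h | h
    · exact absurd h hx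
    · exact Or.inr (by rwa [nu_neg P hx])

lemma nuGe_add {x y : P.K} {c : ℝ} (hx : P.nuGe x c) (hy : P.nuGe y c) :
    P.nuGe (x + y) c := by
  by_cases hx0 : x = 0
  · subst hx0; simpa using hy
  by_cases hy0 : y = 0
  · subst hy0; simpa using hx
  by_cases hxy : x + y = 0
  · exact Or.inl hxy
  · have h1 := P.ν_add x y hx0 hy0 hxy
    have hx' := hx.resolve_left hx0
    have hy' := hy.resolve_left hy0
    right
    have h1' : (min (P.ν x) (P.ν y) : ℚ) ≤ P.ν (x + y) := h1
    have : ((min (P.ν x) (P.ν y) : ℚ) : ℝ) ≤ ((P.ν (x + y) : ℚ) : ℝ) := by exact_mod_cast h1'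
    rw [Rat.cast_min] at this
    exact le_trans (le_min hx' hy') this

lemma nu_add_eq_s15 {x y : P.K} {c : ℝ} (hx : x ≠ 0) (hlt : (P.ν x : ℝ) < c)
    (hy : P.nuGe y c) : x + y ≠ 0 ∧ P.ν (x + y) = P.ν x := by
  by_cases hy0 : y = 0
  · subst hy0; simpa using hx
  have hyv : (P.ν x : ℝ) < (P.ν y : ℝ) := lt_of_lt_of_le hlt (hy.resolve_left hy0)
  have hνlt : P.ν x < P.ν y := by exact_mod_cast hyv
  have hxy : x + y ≠ 0 := by
    intro h
    have hyx : y = -x := by linear_combination h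
    rw [hyx, nu_neg P hx] at hνlt
    exact lt_irrefl _ hνlt
  refine ⟨hxy, ?_⟩
  have h1 := P.ν_add x y hx hy0 hxy
  rw [min_eq_left hνlt.le] at h1
  have h2 := P.ν_add (x + y) (-y) hxy (neg_ne_zero.mpr hy0) (by simpa using hx)
  rw [add_neg_cancel_right, nu_neg P hy0] at h2
  rcases min_le_iff.mp h2 with h | h
  · exact le_antisymm h h1
  · exact absurd h (not_le.mpr hνlt)

open scoped Classical in
/-- `min (ν (a - b)) (min r s)` with the convention `ν 0 = ∞`. -/
noncomputable def alpha (p q : P.K × ℝ) : ℝ :=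
  if p.1 = q.1 then min p.2 q.2 else min (min p.2 q.2) ((P.ν (p.1 - q.1) : ℝ))

open scoped Classical in
lemma alpha_def (p q : P.K × ℝ) : P.alpha p q =
    if p.1 = q.1 then min p.2 q.2 else min (min p.2 q.2) ((P.ν (p.1 - q.1) : ℝ)) := rfl

lemma alpha_le (p q : P.K × ℝ) : P.alpha p q ≤ min p.2 q.2 := by
  unfold alpha
  split
  · exact le_rfl
  · exact min_le_left _ _

lemma nuGe_sub_alpha (p q : P.K × ℝ) : P.nuGe (p.1 - q.1) (P.alpha p q) := by
  unfold alpha nuGe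
  split_ifs with h
  · exact Or.inl (sub_eq_zero.mpr h)
  · exact Or.inr (min_le_right _ _)

lemma abs_sub_eq_two_min (r s : ℝ) : |r - s| = r + s - 2 * min r s := by
  rcases le_total r s with h | h
  · rw [min_eq_left h, abs_of_nonpos (by linarith)]; ring
  · rw [min_eq_right h, abs_of_nonneg (by linarith)]; ring

lemma berkDist_eq_alpha (p q : P.K × ℝ) :
    P.berkDist p q = p.2 + q.2 - 2 * P.alpha p q := by
  unfold berkDist alpha
  by_cases h : p.1 = q.1
  · rw [if_pos (Or.inl h), if_pos h, abs_sub_eq_two_min]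
  · by_cases h2 : min p.2 q.2 ≤ ((P.ν (p.1 - q.1) : ℝ))
    · rw [if_pos (Or.inr h2), if_neg h, min_eq_left h2, abs_sub_eq_two_min]
    · rw [if_neg (by tauto), if_neg h, min_eq_right (le_of_not_ge h2)]

lemma alpha_symm (p q : P.K × ℝ) : P.alpha p q = P.alpha q p := by
  unfold alpha
  by_cases h : p.1 = q.1
  · rw [if_pos h, if_pos h.symm, min_comm]
  · rw [if_neg h, if_neg (Ne.symm h), min_comm p.2 q.2, nu_sub_symm P h]

lemma ballEquiv_iff (p q : P.K × ℝ) :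
    P.ballEquiv p q ↔ p.2 = q.2 ∧ P.nuGe (p.1 - q.1) p.2 := by
  unfold ballEquiv nuGe
  rw [sub_eq_zero]

lemma alpha_congr {p p' q q' : P.K × ℝ} (hp : P.ballEquiv p p') (hq : P.ballEquiv q q') :
    P.alpha p q = P.alpha p' q' := by
  rw [ballEquiv_iff] at hp hq
  obtain ⟨hp2, hp1⟩ := hp
  obtain ⟨hq2, hq1⟩ := hq
  -- key differences
  have hpm : P.nuGe (p'.1 - p.1) (min p.2 q.2) := by
    have := P.nuGe_neg hp1
    rw [neg_sub] at this
    exact P.nuGe_mono this (min_le_left _ _)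
  have hqm : P.nuGe (q.1 - q'.1) (min p.2 q.2) :=
    P.nuGe_mono hq1 (min_le_right _ _)
  have hminE : min p'.2 q'.2 = min p.2 q.2 := by rw [hp2, hq2]
  have key : ∀ c : ℝ, c ≤ min p.2 q.2 → P.nuGe (p.1 - q.1) c → P.nuGe (p'.1 - q'.1) c := by
    intro c hc h
    have := P.nuGe_add (P.nuGe_mono hpm hc) (P.nuGe_add h (P.nuGe_mono hqm hc))
    have heq : p'.1 - p.1 + (p.1 - q.1 + (q.1 - q'.1)) = p'.1 - q'.1 := by ring
    rwa [heq] at this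
  have key' : ∀ c : ℝ, c ≤ min p.2 q.2 → P.nuGe (p'.1 - q'.1) c → P.nuGe (p.1 - q.1) c := by
    intro c hc h
    have h1 := P.nuGe_neg (P.nuGe_mono hpm hc)
    have h2 := P.nuGe_neg (P.nuGe_mono hqm hc)
    rw [neg_sub] at h1 h2
    have := P.nuGe_add h1 (P.nuGe_add h h2)
    have heq : p.1 - p'.1 + (p'.1 - q'.1 + (q'.1 - q.1)) = p.1 - q.1 := by ring
    rwa [heq] at this
  have alpha_of : ∀ x y : P.K × ℝ, P.nuGe (x.1 - y.1) (min x.2 y.2) →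
      P.alpha x y = min x.2 y.2 := by
    intro x y h
    unfold alpha
    split_ifs with hxy
    · rfl
    · exact min_eq_left (h.resolve_left (sub_ne_zero.mpr hxy))
  by_cases hC : P.nuGe (p.1 - q.1) (min p.2 q.2)
  · have hC' := key _ le_rfl hC
    rw [alpha_of p q hC, alpha_of p' q' (by rwa [hminE]), hminE]
  · have hC' : ¬ P.nuGe (p'.1 - q'.1) (min p.2 q.2) := fun h => hC (key' _ le_rfl h)
    have hab : p.1 ≠ q.1 := fun h => hC (Or.inl (sub_eq_zero.mpr h))
    have hab' : p'.1 ≠ q'.1 := fun h => hC' (Or.inl (sub_eq_zero.mpr h))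
    have hlt : (P.ν (p.1 - q.1) : ℝ) < min p.2 q.2 := by
      by_contra h
      exact hC (Or.inr (le_of_not_gt h))
    have hνeq : P.ν (p'.1 - q'.1) = P.ν (p.1 - q.1) := by
      have hyGe : P.nuGe (p'.1 - p.1 + (q.1 - q'.1)) (min p.2 q.2) := P.nuGe_add hpm hqm
      have := P.nu_add_eq_s15 (sub_ne_zero.mpr hab) hlt hyGe
      have heq : p.1 - q.1 + (p'.1 - p.1 + (q.1 - q'.1)) = p'.1 - q'.1 := by ring
      rw [heq] at this
      exact this.2
    have hlt' : (P.ν (p'.1 - q'.1) : ℝ) < min p.2 q.2 := by rw [hνeq]; exact hlt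
    unfold alpha
    rw [if_neg hab, if_neg hab', hminE, min_eq_right hlt.le, min_eq_right hlt'.le, hνeq]

lemma alpha_tri (p q w : P.K × ℝ) : min (P.alpha p q) (P.alpha q w) ≤ P.alpha p w := by
  have h1 : min (P.alpha p q) (P.alpha q w) ≤ min p.2 w.2 := by
    refine le_min ?_ ?_
    · exact le_trans (min_le_left _ _) (le_trans (P.alpha_le p q) (min_le_left _ _))
    · exact le_trans (min_le_right _ _) (le_trans (P.alpha_le q w) (min_le_right _ _))
  rw [P.alpha_def p w]
  split_ifs with h
  · exact h1
  · refine le_min h1 ?_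
    have hge : P.nuGe (p.1 - q.1 + (q.1 - w.1)) (min (P.alpha p q) (P.alpha q w)) :=
      P.nuGe_add (P.nuGe_mono (P.nuGe_sub_alpha p q) (min_le_left _ _))
        (P.nuGe_mono (P.nuGe_sub_alpha q w) (min_le_right _ _))
    have heq : p.1 - q.1 + (q.1 - w.1) = p.1 - w.1 := by ring
    rw [heq] at hge
    exact hge.resolve_left (sub_ne_zero.mpr h)

end PuiseuxCompletion

open PuiseuxCompletion in
/-- the relation `(a,r) ~ (a',r')` iff `r = r'` and `ν(a-a') ≥ r`
is an equivalence relation on `K̂ × ℝ`, and `d` descends to a well-defined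
metric on the quotient `H` (the space of type II and III Berkovich points). -/
theorem statement15 {E : Type u} [Field E] (P : PuiseuxCompletion E) :
    Equivalence P.ballEquiv ∧
    (∀ p p' q q' : P.K × ℝ, P.ballEquiv p p' → P.ballEquiv q q' →
      P.berkDist p q = P.berkDist p' q') ∧
    (∀ p q : P.K × ℝ, 0 ≤ P.berkDist p q) ∧
    (∀ p q : P.K × ℝ, P.berkDist p q = 0 ↔ P.ballEquiv p q) ∧
    (∀ p q : P.K × ℝ, P.berkDist p q = P.berkDist q p) ∧
    (∀ p q r : P.K × ℝ, P.berkDist p r ≤ P.berkDist p q + P.berkDist q r) := by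
  have hsnd : ∀ p q : P.K × ℝ, P.ballEquiv p q → p.2 = q.2 := fun p q h => h.1
  refine ⟨⟨?_, ?_, ?_⟩, ?_, ?_, ?_, ?_, ?_⟩
  · -- refl
    intro p
    rw [P.ballEquiv_iff]
    exact ⟨rfl, by simpa using P.nuGe_zero p.2⟩
  · -- symm
    intro p q h
    rw [P.ballEquiv_iff] at h ⊢
    refine ⟨h.1.symm, ?_⟩
    have := P.nuGe_neg h.2
    rw [neg_sub] at this
    rwa [← h.1]
  · -- trans
    intro p q w hpq hqw
    rw [P.ballEquiv_iff] at hpq hqw ⊢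
    refine ⟨hpq.1.trans hqw.1, ?_⟩
    have h2 : P.nuGe (q.1 - w.1) p.2 := by rw [hpq.1]; exact hqw.2
    have := P.nuGe_add hpq.2 h2
    rwa [show p.1 - q.1 + (q.1 - w.1) = p.1 - w.1 by ring] at this
  · -- well-defined
    intro p p' q q' hp hq
    rw [P.berkDist_eq_alpha, P.berkDist_eq_alpha, P.alpha_congr hp hq, hp.1, hq.1]
  · -- nonneg
    intro p q
    rw [P.berkDist_eq_alpha]
    have h1 := P.alpha_le p q
    have h2 : 0 ≤ |p.2 - q.2| := abs_nonneg _
    rw [abs_sub_eq_two_min] at h2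
    linarith
  · -- d = 0 ↔ equiv
    intro p q
    constructor
    · intro h
      rw [P.berkDist_eq_alpha] at h
      have h1 := P.alpha_le p q
      have h2 : 0 ≤ |p.2 - q.2| := abs_nonneg _
      rw [abs_sub_eq_two_min] at h2
      have hα : P.alpha p q = min p.2 q.2 := by linarith
      have h3 : |p.2 - q.2| = 0 := by rw [abs_sub_eq_two_min]; linarith
      have hrs : p.2 = q.2 := by
        have := abs_eq_zero.mp h3
        linarith [sub_eq_zero.mp this]
      rw [P.ballEquiv_iff]
      refine ⟨hrs, ?_⟩
      have := P.nuGe_sub_alpha p q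
      rw [hα] at this
      exact P.nuGe_mono this (by rw [hrs]; simp)
    · intro h
      rw [P.ballEquiv_iff] at h
      rw [P.berkDist_eq_alpha]
      have hα : P.alpha p q = min p.2 q.2 := by
        unfold PuiseuxCompletion.alpha
        split_ifs with hxy
        · rfl
        · refine min_eq_left ?_
          have := h.2.resolve_left (sub_ne_zero.mpr hxy)
          exact le_trans (min_le_left _ _) this
      rw [hα, h.1, min_self]
      ring
  · -- symm of dist
    intro p q
    rw [P.berkDist_eq_alpha, P.berkDist_eq_alpha, P.alpha_symm]
    ring
  · -- triangle
    intro p q w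
    rw [P.berkDist_eq_alpha, P.berkDist_eq_alpha, P.berkDist_eq_alpha]
    have h1 := P.alpha_tri p q w
    have h2 : P.alpha p q ≤ q.2 := le_trans (P.alpha_le p q) (min_le_right _ _)
    have h3 : P.alpha q w ≤ q.2 := le_trans (P.alpha_le q w) (min_le_left _ _)
    rcases le_total (P.alpha p q) (P.alpha q w) with h | h
    · rw [min_eq_left h] at h1; linarith
    · rw [min_eq_right h] at h1; linarith
end
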